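/- arXiv:2508.09181 — 2 statements merged into one kernel-verified Lean document; each statement's English description precedes it below -/
import Mathlib

section
/- For the UDQ curve u(d) = α[1 - (1 - c)·((exp(1 - d/ι)·d - ι)/ι)^2] with 0 ≤ c < 1 and any ε with c < ε < 1 (guaranteeing the level set is nontrivial), the data preference range {d > 0 : u(d) ≥ εα} is a closed interval [d₋(ι), d₊(ι)] containing ι, and both endpoints scale linearly in ι: d₋(λι) = λ·d₋(ι) and d₊(λι) = λ·d₊(ι) for all λ > 0. Consequently the width d₊(ι) − d₋(ι) is strictly increasing in ι. -/
open Real Set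

noncomputable def gfun (t : ℝ) : ℝ := Real.exp (1 - t) * t

lemma gfun_le_one (t : ℝ) : gfun t ≤ 1 := by
  have h := Real.add_one_le_exp (t - 1)
  have h2 : Real.exp (1 - t) * (t - 1 + 1) ≤ Real.exp (1 - t) * Real.exp (t - 1) :=
    mul_le_mul_of_nonneg_left h (Real.exp_pos _).le
  have h3 : Real.exp (1 - t) * Real.exp (t - 1) = 1 := by
    rw [← Real.exp_add]; norm_num
  simpa [gfun, h3] using h2

lemma gfun_one : gfun 1 = 1 := by simp [gfun]

lemma gfun_hasDeriv (t : ℝ) : HasDerivAt gfun (Real.exp (1 - t) * (1 - t)) t := by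
  have h1 : HasDerivAt (fun x : ℝ => 1 - x) (-1) t := (hasDerivAt_id t).const_sub 1
  have h2 : HasDerivAt (fun x : ℝ => Real.exp (1 - x)) (Real.exp (1 - t) * (-1)) t :=
    (Real.hasDerivAt_exp (1 - t)).comp t h1
  have h3 := h2.mul (hasDerivAt_id t)
  convert h3 using 1
  · rfl
  · rfl
  · funext x; simp [gfun]
  · simp only [id]; ring

lemma gfun_cont : Continuous gfun := by unfold gfun; continuity

lemma gfun_mono : StrictMonoOn gfun (Icc 0 1) := by
  apply strictMonoOn_of_deriv_pos (convex_Icc 0 1) gfun_cont.continuousOn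
  intro t ht
  rw [interior_Icc] at ht
  rw [(gfun_hasDeriv t).deriv]
  nlinarith [ht.1, ht.2, Real.exp_pos (1 - t)]

lemma gfun_anti : StrictAntiOn gfun (Ici 1) := by
  apply strictAntiOn_of_deriv_neg (convex_Ici 1) gfun_cont.continuousOn
  intro t ht
  rw [interior_Ici] at ht
  rw [(gfun_hasDeriv t).deriv]
  have h1 : (1 : ℝ) < t := ht
  nlinarith [Real.exp_pos (1 - t)]

lemma gfun_levelset (m : ℝ) (hm0 : 0 < m) (hm1 : m < 1) :
    ∃ a b : ℝ, 0 < a ∧ a < 1 ∧ 1 < b ∧ {t : ℝ | 0 < t ∧ m ≤ gfun t} = Icc a b := by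
  -- left endpoint
  have h01 : (0:ℝ) ≤ 1 := zero_le_one
  have hIV := intermediate_value_Icc h01 gfun_cont.continuousOn
  have hm : m ∈ Icc (gfun 0) (gfun 1) := by
    simp [gfun, gfun_one]
    constructor <;> [exact hm0.le; exact hm1.le]
  obtain ⟨a, haI, ha⟩ := hIV hm
  -- right endpoint
  set T : ℝ := 1 + 8 / m with hT
  have hT1 : 1 ≤ T := by
    have : 0 < 8 / m := by positivity
    rw [hT]; linarith
  have hgT : gfun T < m := by
    have hs : Real.exp (T - 1) ≥ (1 + (T-1)/2)^2 := by
      have h4 : Real.exp ((T-1)/2) ≥ 1 + (T-1)/2 := by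
        have := Real.add_one_le_exp ((T-1)/2); linarith
      have h5 : (0:ℝ) ≤ 1 + (T-1)/2 := by
        have : 0 < 8 / m := by positivity
        rw [hT]; nlinarith
      calc Real.exp (T - 1) = Real.exp ((T-1)/2) * Real.exp ((T-1)/2) := by
            rw [← Real.exp_add]; ring_nf
        _ ≥ (1 + (T-1)/2) * (1 + (T-1)/2) := by nlinarith [Real.exp_pos ((T-1)/2)]
        _ = (1 + (T-1)/2)^2 := by ring
    have hTm : T < m * Real.exp (T - 1) := by
      have h6 : m * (1 + (T-1)/2)^2 > T := by
        rw [hT]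
        have h7 : m * (1 + (8/m)/2)^2 = m + 8 + 16 / m := by
          field_simp; ring
        rw [show (1 + 8/m - 1) = 8/m by ring, h7]
        have h8 : 0 < 8 / m := by positivity
        have h9 : 8 / m + 8 / m = 16 / m := by ring
        linarith
      have h10 := mul_le_mul_of_nonneg_left hs hm0.le
      exact lt_of_lt_of_le h6 h10
    have he : Real.exp (1 - T) * Real.exp (T - 1) = 1 := by
      rw [← Real.exp_add]; norm_num
    have := mul_lt_mul_of_pos_left hTm (Real.exp_pos (1 - T))
    rw [mul_comm m _, ← mul_assoc, he, one_mul] at this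
    simpa [gfun] using this
  have hIV2 := intermediate_value_Icc' hT1 gfun_cont.continuousOn
  have hm2 : m ∈ Icc (gfun T) (gfun 1) := ⟨hgT.le, by rw [gfun_one]; exact hm1.le⟩
  obtain ⟨b, hbI, hb⟩ := hIV2 hm2
  have ha0 : 0 < a := by
    rcases lt_or_ge 0 a with h | h
    · exact h
    · exfalso
      have : gfun a ≤ 0 := by
        have : Real.exp (1 - a) * a ≤ 0 := mul_nonpos_of_nonneg_of_nonpos (Real.exp_pos _).le h
        simpa [gfun] using this
      linarith [ha ▸ this]
  have ha1 : a < 1 := by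
    rcases lt_or_eq_of_le haI.2 with h | h
    · exact h
    · exfalso; rw [h, gfun_one] at ha; linarith
  have hb1 : 1 < b := by
    rcases lt_or_eq_of_le hbI.1 with h | h
    · exact h
    · exfalso; rw [← h, gfun_one] at hb; linarith
  refine ⟨a, b, ha0, ha1, hb1, ?_⟩
  ext t
  simp only [mem_setOf_eq, mem_Icc]
  constructor
  · rintro ⟨ht0, htm⟩
    constructor
    · by_contra h
      push_neg at h
      have htI : t ∈ Icc (0:ℝ) 1 := ⟨ht0.le, le_trans h.le ha1.le⟩
      have := gfun_mono htI ⟨ha0.le, ha1.le⟩ h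
      rw [ha] at this; linarith
    · by_contra h
      push_neg at h
      have := gfun_anti (mem_Ici.mpr hb1.le) (mem_Ici.mpr (hb1.le.trans h.le)) h
      rw [hb] at this; linarith
  · rintro ⟨hat, htb⟩
    refine ⟨lt_of_lt_of_le ha0 hat, ?_⟩
    rcases le_or_gt t 1 with h | h
    · have := gfun_mono.monotoneOn ⟨ha0.le, ha1.le⟩ ⟨le_trans ha0.le hat, h⟩ hat
      rw [ha] at this; linarith
    · have := gfun_anti.antitoneOn (mem_Ici.mpr h.le) (mem_Ici.mpr hb1.le) htb
      rw [hb] at this; linarith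

/-- Proposition 1 (θ = 1 case): the data preference range {d > 0 : u(d;ι) ≥ εα}
is a closed interval [d₋(ι), d₊(ι)] containing ι, both endpoints scale linearly
in ι, and consequently the width d₊(ι) − d₋(ι) is strictly increasing in ι. -/
theorem preference_range_width_monotone (α c ε : ℝ) (hα : 0 < α) (hc0 : 0 ≤ c)
    (hc1 : c < 1) (hεc : c < ε) (hε1 : ε < 1)
    (u : ℝ → ℝ → ℝ)
    (hu : ∀ ι d, u ι d = α * (1 - (1 - c) * ((Real.exp (1 - d / ι) * d - ι) / ι) ^ 2)) :
    ∃ dlo dhi : ℝ → ℝ,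
      (∀ ι : ℝ, 0 < ι →
        {d : ℝ | 0 < d ∧ ε * α ≤ u ι d} = Set.Icc (dlo ι) (dhi ι) ∧
        0 < dlo ι ∧ dlo ι ≤ ι ∧ ι ≤ dhi ι ∧
        (∀ lam : ℝ, 0 < lam → dlo (lam * ι) = lam * dlo ι ∧ dhi (lam * ι) = lam * dhi ι)) ∧
      StrictMonoOn (fun ι => dhi ι - dlo ι) (Set.Ioi 0) := by
  have hc : 0 < 1 - c := by linarith
  have hε : 0 < 1 - ε := by linarith
  have hK0 : 0 < (1 - ε) / (1 - c) := by positivity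
  have hK1 : (1 - ε) / (1 - c) < 1 := by rw [div_lt_one hc]; linarith
  set K : ℝ := (1 - ε) / (1 - c) with hK
  have hs0 : 0 < Real.sqrt K := Real.sqrt_pos.mpr hK0
  have hs1 : Real.sqrt K < 1 := by
    rw [show (1:ℝ) = Real.sqrt 1 by simp]
    exact Real.sqrt_lt_sqrt hK0.le (by simpa using hK1)
  set m : ℝ := 1 - Real.sqrt K with hmdef
  have hm0 : 0 < m := by rw [hmdef]; linarith
  have hm1 : m < 1 := by rw [hmdef]; linarith
  obtain ⟨a, b, ha0, ha1, hb1, hset⟩ := gfun_levelset m hm0 hm1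
  refine ⟨fun ι => a * ι, fun ι => b * ι, ?_, ?_⟩
  · intro ι hι
    refine ⟨?_, by positivity, by show a * ι ≤ ι; nlinarith, by show ι ≤ b * ι; nlinarith,
      fun lam hlam => ⟨by ring, by ring⟩⟩
    ext d
    simp only [mem_setOf_eq, mem_Icc]
    have hι0 : ι ≠ 0 := ne_of_gt hι
    have hX : (Real.exp (1 - d / ι) * d - ι) / ι = gfun (d / ι) - 1 := by
      unfold gfun; field_simp
    have hgle := gfun_le_one (d / ι)
    have h4 : 0 ≤ 1 - gfun (d / ι) := by linarith
    have hKs : Real.sqrt K ^ 2 = K := Real.sq_sqrt hK0.le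
    have hcond : ε * α ≤ u ι d ↔ m ≤ gfun (d / ι) := by
      rw [hu, hX]
      constructor
      · intro h
        have h1 : (1 - c) * (gfun (d / ι) - 1) ^ 2 ≤ 1 - ε := by nlinarith
        have h2 : (1 - gfun (d / ι)) ^ 2 ≤ K := by
          rw [hK, le_div_iff₀ hc]; nlinarith
        have h3 : 1 - gfun (d / ι) ≤ Real.sqrt K := by
          calc 1 - gfun (d / ι) = Real.sqrt ((1 - gfun (d / ι)) ^ 2) :=
                (Real.sqrt_sq h4).symm
            _ ≤ Real.sqrt K := Real.sqrt_le_sqrt h2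
        rw [hmdef]; linarith
      · intro h
        have h3 : 1 - gfun (d / ι) ≤ Real.sqrt K := by rw [hmdef] at h; linarith
        have h2 : (1 - gfun (d / ι)) ^ 2 ≤ K := by nlinarith
        have h1 : (1 - c) * (gfun (d / ι) - 1) ^ 2 ≤ 1 - ε := by
          have := (le_div_iff₀ hc).mp (hK ▸ h2)
          nlinarith
        nlinarith
    constructor
    · rintro ⟨hd0, hd⟩
      have hmem : d / ι ∈ Icc a b := by
        rw [← hset]; exact ⟨by positivity, hcond.mp hd⟩
      exact ⟨(le_div_iff₀ hι).mp hmem.1, (div_le_iff₀ hι).mp hmem.2⟩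
    · rintro ⟨h1, h2⟩
      have hd0 : 0 < d := lt_of_lt_of_le (by positivity : (0:ℝ) < a * ι) h1
      have hmem : d / ι ∈ {t : ℝ | 0 < t ∧ m ≤ gfun t} := by
        rw [hset]; exact ⟨(le_div_iff₀ hι).mpr h1, (div_le_iff₀ hι).mpr h2⟩
      exact ⟨hd0, hcond.mpr hmem.2⟩
  · intro x hx y hy hxy
    simp only
    have hba : 0 < b - a := by linarith
    have hx0 : (0:ℝ) < x := hx
    nlinarith
end

section
/- The communication energy E(B) = ((2^{s/B} − 1)·B·ϱ)/(h·s), viewed as a function of allocated bandwidth B > 0 with fixed rate s > 0, channel coefficient h > 0, and model size ϱ > 0, is strictly decreasing and convex in B, and E(B) → (ϱ·ln 2)/h as B → ∞. -/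
open Real Set Filter

-- derivative of the core function
lemma aux_deriv (a c x : ℝ) (hx : x ≠ 0) :
    HasDerivAt (fun B : ℝ => c * (B * Real.exp (a / B) - B))
      (c * (Real.exp (a / x) * (1 - a / x) - 1)) x := by
  have h1 : HasDerivAt (fun B : ℝ => a / B) (-(a / x ^ 2)) x := by
    simpa [div_eq_mul_inv, mul_comm, mul_assoc, neg_mul, mul_neg] using
      ((hasDerivAt_inv hx).const_mul a)
  have h2 : HasDerivAt (fun B : ℝ => Real.exp (a / B))
      (Real.exp (a / x) * -(a / x ^ 2)) x := h1.exp
  have h3 := (hasDerivAt_id x).mul h2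
  have h4 := (h3.sub (hasDerivAt_id x)).const_mul c
  refine h4.congr_deriv ?_
  simp only [id]
  field_simp
  ring

-- phi t = exp t * (1 - t) is strictly antitone on Ici 0
lemma aux_phi_anti : StrictAntiOn (fun t : ℝ => Real.exp t * (1 - t)) (Set.Ici 0) := by
  apply strictAntiOn_of_deriv_neg (convex_Ici 0)
  · fun_prop
  · intro t ht
    rw [interior_Ici] at ht
    have hd : HasDerivAt (fun t : ℝ => Real.exp t * (1 - t)) (-t * Real.exp t) t := by
      have := (Real.hasDerivAt_exp t).mul ((hasDerivAt_const t (1:ℝ)).sub (hasDerivAt_id t))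
      refine this.congr_deriv ?_
      simp only [Pi.sub_apply, id]
      ring
    rw [hd.deriv]
    have := Real.exp_pos t
    nlinarith [ht.out]

lemma aux_phi_lt_one {t : ℝ} (ht : 0 < t) : Real.exp t * (1 - t) < 1 := by
  have h1 : (-t) + 1 < Real.exp (-t) := Real.add_one_lt_exp (by linarith)
  have h2 : Real.exp t * (1 - t) < Real.exp t * Real.exp (-t) := by
    apply mul_lt_mul_of_pos_left _ (Real.exp_pos t)
    linarith
  rwa [← Real.exp_add, add_neg_cancel, Real.exp_zero] at h2

/-- The communication energy E(B) = ((2^{s/B} − 1)·B·ϱ)/(h·s) is strictly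
decreasing and convex in the bandwidth B > 0, and E(B) → ϱ·ln 2 / h as B → ∞. -/
theorem communication_energy_properties (s h ϱ : ℝ) (hs : 0 < s) (hh : 0 < h)
    (hϱ : 0 < ϱ) (E : ℝ → ℝ)
    (hE : ∀ B, E B = (((2 : ℝ) ^ (s / B) - 1) * B * ϱ) / (h * s)) :
    StrictAntiOn E (Set.Ioi 0) ∧
    ConvexOn ℝ (Set.Ioi 0) E ∧
    Filter.Tendsto E Filter.atTop (nhds (ϱ * Real.log 2 / h)) := by
  set a : ℝ := s * Real.log 2 with ha_def
  set c : ℝ := ϱ / (h * s) with hc_def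
  have hlog2 : 0 < Real.log 2 := Real.log_pos (by norm_num)
  have ha : 0 < a := mul_pos hs hlog2
  have hc : 0 < c := div_pos hϱ (mul_pos hh hs)
  have hEeq : E = fun B : ℝ => c * (B * Real.exp (a / B) - B) := by
    funext B
    rw [hE, Real.rpow_def_of_pos (by norm_num : (0:ℝ) < 2)]
    have : Real.log 2 * (s / B) = a / B := by
      rw [ha_def]; ring
    rw [this, hc_def]
    have hhs : h * s ≠ 0 := ne_of_gt (mul_pos hh hs)
    field_simp
  -- continuity on Ioi 0
  have hcont : ContinuousOn E (Set.Ioi 0) := by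
    rw [hEeq]
    apply ContinuousOn.mul continuousOn_const
    apply ContinuousOn.sub _ continuousOn_id
    exact continuousOn_id.mul
      (ContinuousOn.rexp (continuousOn_const.div continuousOn_id fun x hx => ne_of_gt hx))
  -- derivative formula on Ioi 0
  have hderiv : ∀ x ∈ Set.Ioi (0:ℝ),
      deriv E x = c * (Real.exp (a / x) * (1 - a / x) - 1) := by
    intro x hx
    rw [hEeq]
    exact (aux_deriv a c x (ne_of_gt hx)).deriv
  -- part 1: strictly decreasing
  have hanti : StrictAntiOn E (Set.Ioi 0) := by
    apply strictAntiOn_of_deriv_neg (convex_Ioi 0) hcont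
    intro x hx
    rw [interior_Ioi] at hx
    rw [hderiv x hx]
    have htpos : 0 < a / x := div_pos ha hx
    have := aux_phi_lt_one htpos
    nlinarith
  refine ⟨hanti, ?_, ?_⟩
  -- part 2: convexity
  · apply MonotoneOn.convexOn_of_deriv (convex_Ioi 0) hcont
    · rw [interior_Ioi]
      intro x hx
      exact ((aux_deriv a c x (ne_of_gt hx)).differentiableAt.congr_of_eventuallyEq
        (Filter.eventuallyEq_of_mem (Ioi_mem_nhds hx) fun y _ => by rw [hEeq])).differentiableWithinAt
    · rw [interior_Ioi]
      intro x hx y hy hxy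
      rw [hderiv x hx, hderiv y hy]
      have h1 : a / y ≤ a / x := div_le_div_of_nonneg_left ha.le hx hxy
      have h2 : Real.exp (a / x) * (1 - a / x) ≤ Real.exp (a / y) * (1 - a / y) := by
        rcases eq_or_lt_of_le h1 with heq | hlt
        · rw [heq]
        · exact (aux_phi_anti (le_of_lt (div_pos ha hy)) (le_of_lt (div_pos ha hx)) hlt).le
      nlinarith
  -- part 3: limit
  · have hslope : Filter.Tendsto (fun t : ℝ => (Real.exp t - 1) / t) (nhdsWithin 0 {(0:ℝ)}ᶜ) (nhds 1) := by
      have := hasDerivAt_iff_tendsto_slope.mp (Real.hasDerivAt_exp 0)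
      rw [Real.exp_zero] at this
      refine this.congr fun t => ?_
      simp [slope_def_field, div_eq_mul_inv]
    have hcomp : Filter.Tendsto (fun B : ℝ => a / B) Filter.atTop (nhdsWithin 0 {(0:ℝ)}ᶜ) := by
      rw [tendsto_nhdsWithin_iff]
      constructor
      · exact Filter.Tendsto.div_atTop tendsto_const_nhds tendsto_id
      · filter_upwards [Filter.eventually_gt_atTop 0] with B hB
        exact ne_of_gt (div_pos ha hB)
    have hmain : Filter.Tendsto (fun B : ℝ => c * a * ((Real.exp (a / B) - 1) / (a / B)))
        Filter.atTop (nhds (c * a * 1)) := ((hslope.comp hcomp).const_mul (c * a))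
    have heq : (fun B : ℝ => c * a * ((Real.exp (a / B) - 1) / (a / B))) =ᶠ[Filter.atTop] E := by
      filter_upwards [Filter.eventually_gt_atTop 0] with B hB
      rw [hEeq]
      have hB' : B ≠ 0 := ne_of_gt hB
      have ha' : a ≠ 0 := ne_of_gt ha
      field_simp
    have hval : c * a * 1 = ϱ * Real.log 2 / h := by
      rw [hc_def, ha_def]
      field_simp
    rw [← hval]
    exact hmain.congr' heq
end
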